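/- For t ∈ ℝ, let L_t ⊆ ℂP² be the set of points [(a₁ + i a₂)e^{iπt/3} : (a₁ − i a₂)e^{iπt/3} : a₃ e^{−2iπt/3}] as (a₁, a₂, a₃) ranges over ℝ³ ∖ {0}. Then for all t₁, t₂ ∈ ℝ with t₁ − t₂ ∉ ℤ, the intersection L_{t₁} ∩ L_{t₂} equals {[0 : 0 : 1]} ∪ {[a : b : 0] : a, b ∈ ℂ, |a| = |b| ≠ 0}. -/

import Mathlib

open Projectivization

/-- The representative vector of a point of `L_t`, for a real vector `a`:
`((a₁ + i a₂)e^{iπt/3}, (a₁ - i a₂)e^{iπt/3}, a₃ e^{-2iπt/3})`. -/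
noncomputable def Lvec (t : ℝ) (a : Fin 3 → ℝ) : Fin 3 → ℂ :=
  ![((a 0 : ℂ) + Complex.I * (a 1 : ℂ)) * Complex.exp (Complex.I * Real.pi * t / 3),
    ((a 0 : ℂ) - Complex.I * (a 1 : ℂ)) * Complex.exp (Complex.I * Real.pi * t / 3),
    (a 2 : ℂ) * Complex.exp (-(2 * Complex.I * Real.pi * t) / 3)]

/-- The Lagrangian `L_t ⊆ ℂP²`: the image of the standard `ℝP²` under the given loop of
isometries. -/
noncomputable def Lset (t : ℝ) : Set (Projectivization ℂ (Fin 3 → ℂ)) :=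
  {p | ∃ a : Fin 3 → ℝ, a ≠ 0 ∧ ∃ h : Lvec t a ≠ 0,
        p = Projectivization.mk ℂ (Lvec t a) h}

lemma vec001_ne_zero : (![0, 0, 1] : Fin 3 → ℂ) ≠ 0 := by
  intro h
  simpa using congrFun h 2

lemma mem001 (t : ℝ) : Projectivization.mk ℂ ![0, 0, 1] vec001_ne_zero ∈ Lset t := by
  set F : ℂ := Complex.exp (-(2 * Complex.I * Real.pi * t) / 3) with hF
  have hFne : F ≠ 0 := Complex.exp_ne_zero _
  have hsm : Lvec t ![0, 0, 1] = F • ![0, 0, 1] := by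
    funext i; fin_cases i <;> simp [Lvec, hF]
  have hne : Lvec t ![0, 0, 1] ≠ 0 := by
    rw [hsm]; exact smul_ne_zero hFne vec001_ne_zero
  refine ⟨![0, 0, 1], ?_, hne, ?_⟩
  · intro h0; simpa using congrFun h0 2
  · exact ((Projectivization.mk_eq_mk_iff ℂ _ _ hne vec001_ne_zero).mpr
      ⟨Units.mk0 F hFne, by simpa using hsm.symm⟩).symm

lemma conj_add (x y : ℝ) :
    (starRingEnd ℂ) ((x : ℂ) + Complex.I * y) = (x : ℂ) - Complex.I * y := by
  simp [map_add, map_mul, Complex.conj_I, Complex.conj_ofReal]; ring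

lemma conj_sub (x y : ℝ) :
    (starRingEnd ℂ) ((x : ℂ) - Complex.I * y) = (x : ℂ) + Complex.I * y := by
  simp [map_sub, map_mul, Complex.conj_I, Complex.conj_ofReal]

lemma conjE (t : ℝ) :
    (starRingEnd ℂ) (Complex.exp (Complex.I * Real.pi * t / 3)) =
      Complex.exp (-(Complex.I * Real.pi * t / 3)) := by
  rw [← Complex.exp_conj]
  congr 1
  simp [map_div₀, map_mul, Complex.conj_I, Complex.conj_ofReal, map_ofNat]
  ring

lemma conjF (t : ℝ) :
    (starRingEnd ℂ) (Complex.exp (-(2 * Complex.I * Real.pi * t) / 3)) =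
      Complex.exp (-(-(2 * Complex.I * Real.pi * t) / 3)) := by
  rw [← Complex.exp_conj]
  congr 1
  simp [map_div₀, map_mul, map_neg, Complex.conj_I, Complex.conj_ofReal, map_ofNat]
  ring

lemma circle_mem (t : ℝ) (a b : ℂ) (h1 : ‖a‖ = ‖b‖)
    (h2 : ‖b‖ ≠ 0) (hab : (![a, b, 0] : Fin 3 → ℂ) ≠ 0) :
    Projectivization.mk ℂ ![a, b, 0] hab ∈ Lset t := by
  have hb : b ≠ 0 := fun h => h2 (by simp [h])
  have ha : a ≠ 0 := fun h => h2 (by rw [← h1, h]; simp)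
  set E : ℂ := Complex.exp (Complex.I * Real.pi * t / 3) with hE
  have hEne : E ≠ 0 := Complex.exp_ne_zero _
  set u : ℂ := a / E with hu
  set v : ℂ := b / E with hv
  have hune : u ≠ 0 := div_ne_zero ha hEne
  have hvne : v ≠ 0 := div_ne_zero hb hEne
  set z : ℂ := (starRingEnd ℂ) u / v with hz
  have habsu : ‖u‖ = ‖v‖ := by
    rw [hu, hv, norm_div, norm_div, h1]
  have habsz : ‖z‖ = 1 := by
    rw [hz, norm_div, Complex.norm_conj, habsu,
      div_self (norm_ne_zero_iff.mpr hvne)]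
  have hzexp : Complex.exp ((z.arg : ℂ) * Complex.I) = z := by
    have := Complex.norm_mul_exp_arg_mul_I z
    rwa [habsz, Complex.ofReal_one, one_mul] at this
  set l : ℂ := Complex.exp (((z.arg / 2 : ℝ) : ℂ) * Complex.I) with hl
  have hlne : l ≠ 0 := Complex.exp_ne_zero _
  have hconjl : (starRingEnd ℂ) l = Complex.exp (-(((z.arg / 2 : ℝ) : ℂ) * Complex.I)) := by
    rw [hl, ← Complex.exp_conj]
    congr 1
    simp [map_mul, Complex.conj_ofReal, Complex.conj_I, map_ofNat]
  have hll : l * l = z := by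
    rw [hl, ← Complex.exp_add,
      show ((z.arg / 2 : ℝ) : ℂ) * Complex.I + ((z.arg / 2 : ℝ) : ℂ) * Complex.I
        = (z.arg : ℂ) * Complex.I by push_cast; ring, hzexp]
  have hinv : (starRingEnd ℂ) l * l = 1 := by
    rw [hconjl, hl, ← Complex.exp_add]; simp
  have hcu : (starRingEnd ℂ) u = z * v := by rw [hz]; field_simp
  have hkey : l * v = (starRingEnd ℂ) (l * u) := by
    rw [map_mul, hcu, ← hll]
    linear_combination (-(l * v)) * hinv
  set x : ℝ := (l * u).re with hx
  set y : ℝ := (l * u).im with hy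
  have hxy : (x : ℂ) + Complex.I * y = l * u := by
    rw [hx, hy, mul_comm Complex.I _]
    exact_mod_cast Complex.re_add_im (l * u)
  have hxy' : (x : ℂ) - Complex.I * y = l * v := by
    rw [hkey, ← hxy, conj_add]
  have hsm : Lvec t ![x, y, 0] = l • ![a, b, 0] := by
    funext i
    fin_cases i <;>
      simp only [Lvec, Matrix.cons_val_zero, Matrix.cons_val_one, Matrix.head_cons,
        Matrix.cons_val_two, Matrix.tail_cons, Pi.smul_apply, smul_eq_mul, ← hE,
        Fin.isValue]
    · rw [hxy, hu]; field_simp; simp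
    · rw [hxy', hv]; field_simp; simp
    · simp
  have hLne : Lvec t ![x, y, 0] ≠ 0 := by
    rw [hsm]; exact smul_ne_zero hlne hab
  refine ⟨![x, y, 0], ?_, hLne, ?_⟩
  · intro h0
    apply hLne
    rw [show (![x, y, 0] : Fin 3 → ℝ) = 0 from h0]
    funext i; fin_cases i <;> simp [Lvec]
  · exact ((Projectivization.mk_eq_mk_iff ℂ _ _ hLne hab).mpr
      ⟨Units.mk0 l hlne, by simpa using hsm.symm⟩).symm

/-- For `t₁ - t₂ ∉ ℤ`, the intersection `L_{t₁} ∩ L_{t₂}` consists of the single point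
`[0:0:1]` together with the circle `{[a : b : 0] : |a| = |b| ≠ 0}`. -/
theorem Lset_inter_Lset (t₁ t₂ : ℝ) (h : ∀ n : ℤ, t₁ - t₂ ≠ (n : ℝ)) :
    Lset t₁ ∩ Lset t₂ =
      {p | p = Projectivization.mk ℂ ![0, 0, 1] vec001_ne_zero} ∪
      {p | ∃ a b : ℂ, ‖a‖ = ‖b‖ ∧ ‖b‖ ≠ 0 ∧
            ∃ hab : (![a, b, 0] : Fin 3 → ℂ) ≠ 0,
              p = Projectivization.mk ℂ ![a, b, 0] hab} := by
  ext p
  constructor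
  · rintro ⟨⟨a, ha, hna, rfl⟩, b, hb, hnb, hp⟩
    rw [Projectivization.mk_eq_mk_iff] at hp
    obtain ⟨cu, hcu⟩ := hp
    set c : ℂ := (cu : ℂ) with hc
    have hcne : c ≠ 0 := cu.ne_zero
    have h0 := congrFun hcu 0
    have h1 := congrFun hcu 1
    have h2 := congrFun hcu 2
    simp only [Pi.smul_apply, Units.smul_def, smul_eq_mul, Lvec, Matrix.cons_val_zero,
      Matrix.cons_val_one, Matrix.head_cons, Matrix.cons_val_two, Matrix.tail_cons,
      ← hc] at h0 h1 h2
    by_cases ha2 : a 2 = 0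
    · -- third coordinate vanishes: point is on the circle
      right
      set A : ℂ := ((a 0 : ℂ) + Complex.I * (a 1 : ℂ)) *
        Complex.exp (Complex.I * Real.pi * t₁ / 3) with hA
      set B : ℂ := ((a 0 : ℂ) - Complex.I * (a 1 : ℂ)) *
        Complex.exp (Complex.I * Real.pi * t₁ / 3) with hB
      have habs : ‖A‖ = ‖B‖ := by
        rw [hA, hB, norm_mul, norm_mul]
        congr 1
        rw [← conj_add, Complex.norm_conj]
      have hBne : B ≠ 0 := by
        rw [hB]
        refine mul_ne_zero ?_ (Complex.exp_ne_zero _)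
        intro h0'
        rw [Complex.ext_iff] at h0'
        simp at h0'
        exact ha (by funext i; fin_cases i <;> simp [h0'.1, h0'.2, ha2])
      have hvec : Lvec t₁ a = ![A, B, 0] := by
        funext i; fin_cases i <;> simp [Lvec, hA, hB, ha2]
      have habne : (![A, B, 0] : Fin 3 → ℂ) ≠ 0 := by rw [← hvec]; exact hna
      refine ⟨A, B, habs, norm_ne_zero_iff.mpr hBne, habne, ?_⟩
      exact (Projectivization.mk_eq_mk_iff ℂ _ _ hna habne).mpr ⟨1, by simp [hvec]⟩
    · -- third coordinate nonzero: point is [0:0:1]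
      left
      have hb2 : (b 2 : ℂ) ≠ 0 := by
        intro h0'
        rw [h0', zero_mul, mul_zero] at h2
        exact ha2 (by exact_mod_cast
          ((mul_eq_zero.mp h2.symm).resolve_right (Complex.exp_ne_zero _)))
      have hw0 : (b 0 : ℂ) + Complex.I * (b 1 : ℂ) = 0 := by
        by_contra hwne
        -- conjugates of the equations
        have h1' := congrArg (starRingEnd ℂ) h1
        have h2' := congrArg (starRingEnd ℂ) h2
        simp only [map_mul, conj_sub, Complex.conj_ofReal, conjE] at h1'
        simp only [map_mul, Complex.conj_ofReal, conjF] at h2'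
        set cc : ℂ := (starRingEnd ℂ) c with hcc
        set A : ℂ := (a 0 : ℂ) + Complex.I * (a 1 : ℂ) with hA
        have hAne : A ≠ 0 := by
          intro hA0
          rw [hA0, zero_mul] at h0
          have hz1 := (mul_eq_zero.mp h0).resolve_left hcne
          exact hwne ((mul_eq_zero.mp hz1).resolve_right (Complex.exp_ne_zero _))
        have p1 := congrArg₂ (· * ·) h0 h2'
        have p2 := congrArg₂ (· * ·) h1' h2
        set E₁ : ℂ := Complex.exp (Complex.I * Real.pi * t₁ / 3) with hE1
        set E₂ : ℂ := Complex.exp (Complex.I * Real.pi * t₂ / 3) with hE2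
        set E₁' : ℂ := Complex.exp (-(Complex.I * Real.pi * t₁ / 3)) with hE1'
        set E₂' : ℂ := Complex.exp (-(Complex.I * Real.pi * t₂ / 3)) with hE2'
        set F₁ : ℂ := Complex.exp (-(2 * Complex.I * Real.pi * t₁) / 3) with hF1
        set F₂ : ℂ := Complex.exp (-(2 * Complex.I * Real.pi * t₂) / 3) with hF2
        set F₁' : ℂ := Complex.exp (-(-(2 * Complex.I * Real.pi * t₁) / 3)) with hF1'
        set F₂' : ℂ := Complex.exp (-(-(2 * Complex.I * Real.pi * t₂) / 3)) with hF2'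
        have main : A * (a 2 : ℂ) * (E₁ * F₁' * (E₂' * F₂) - E₁' * F₁ * (E₂ * F₂')) = 0 := by
          linear_combination (E₂ * F₂') * p2 - (E₂' * F₂) * p1
        have ha2c : (a 2 : ℂ) ≠ 0 := by exact_mod_cast ha2
        have hXY : E₁ * F₁' * (E₂' * F₂) = E₁' * F₁ * (E₂ * F₂') :=
          sub_eq_zero.mp ((mul_eq_zero.mp main).resolve_left
            (mul_ne_zero hAne ha2c))
        rw [hE1, hE2, hE1', hE2', hF1, hF2, hF1', hF2', ← Complex.exp_add, ← Complex.exp_add,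
          ← Complex.exp_add, ← Complex.exp_add, ← Complex.exp_add, ← Complex.exp_add] at hXY
        rw [Complex.exp_eq_exp_iff_exists_int] at hXY
        obtain ⟨n, hn⟩ := hXY
        refine h n ?_
        have hI : (Complex.I * (Real.pi : ℂ)) ≠ 0 :=
          mul_ne_zero Complex.I_ne_zero (by exact_mod_cast Real.pi_ne_zero)
        have hfin : Complex.I * (Real.pi : ℂ) * ((t₁ : ℂ) - (t₂ : ℂ)) =
            Complex.I * (Real.pi : ℂ) * ((n : ℝ) : ℂ) := by
          push_cast at hn ⊢
          linear_combination hn / 2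
        have := mul_left_cancel₀ hI hfin
        exact_mod_cast this
      -- now the first two coordinates of `Lvec t₁ a` vanish
      have hA0 : (a 0 : ℂ) + Complex.I * (a 1 : ℂ) = 0 := by
        rw [hw0, zero_mul, mul_zero] at h0
        exact (mul_eq_zero.mp h0.symm).resolve_right (Complex.exp_ne_zero _)
      have ha0 : a 0 = 0 ∧ a 1 = 0 := by
        rw [Complex.ext_iff] at hA0
        simpa using hA0
      have hsm : Lvec t₁ a = ((a 2 : ℂ) * Complex.exp (-(2 * Complex.I * Real.pi * t₁) / 3)) •
          ![0, 0, 1] := by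
        funext i; fin_cases i <;> simp [Lvec, ha0.1, ha0.2]
      have hprodne : ((a 2 : ℂ) * Complex.exp (-(2 * Complex.I * Real.pi * t₁) / 3)) ≠ 0 :=
        mul_ne_zero (by exact_mod_cast ha2) (Complex.exp_ne_zero _)
      exact (Projectivization.mk_eq_mk_iff ℂ _ _ hna vec001_ne_zero).mpr
        ⟨Units.mk0 _ hprodne, by exact hsm.symm⟩
  · rintro (hp | ⟨A, B, h1, h2, hab, rfl⟩)
    · rw [hp]; exact ⟨mem001 t₁, mem001 t₂⟩
    · exact ⟨circle_mem t₁ A B h1 h2 hab, circle_mem t₂ A B h1 h2 hab⟩
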